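/- Let u_l > u_r be real numbers and ρ_l, ρ_r > 0. Then there exists η > 0 such that for every ε with 0 < ε < η there exists a unique pair (u*, ρ*) of real numbers with u_r < u* < u_l, ρ* > ρ_l and ρ* > ρ_r, satisfying simultaneously (u* − u_l)²·(ρ* + ρ_l)/2 = ε·(ρ* − ρ_l)·(p(ρ*) − p(ρ_l)) and (u* − u_r)²·(ρ* + ρ_r)/2 = ε·(ρ* − ρ_r)·(p(ρ*) − p(ρ_r)). (This intermediate state connects (u_l,ρ_l) to (u*,ρ*) by an admissible 1-shock and (u*,ρ*) to (u_r,ρ_r) by an admissible 2-shock of the perturbed Euler system u_t + (u²/2 + ε p(ρ))_x = 0, ρ_t + (ρu)_x = 0.) -/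

import Mathlib

open Real Filter Topology

/-- The pressure-like function `p(ρ) = ∫₀^ρ ξ·e^ξ dξ`. -/
noncomputable def p (ρ : ℝ) : ℝ := ∫ ξ in (0:ℝ)..ρ, ξ * Real.exp ξ

lemma p_closed (ρ : ℝ) : p ρ = (ρ - 1) * Real.exp ρ + 1 := by
  have h : ∀ x ∈ Set.uIcc (0:ℝ) ρ, HasDerivAt (fun ξ => (ξ - 1) * Real.exp ξ) (x * Real.exp x) x := by
    intro x _
    have h1 : HasDerivAt (fun ξ : ℝ => (ξ - 1) * Real.exp ξ)
        (1 * Real.exp x + (x - 1) * Real.exp x) x :=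
      ((hasDerivAt_id x).sub_const 1).mul (Real.hasDerivAt_exp x)
    convert h1 using 1; ring
  have hint : IntervalIntegrable (fun ξ : ℝ => ξ * Real.exp ξ) MeasureTheory.volume 0 ρ :=
    (continuous_id.mul Real.continuous_exp).intervalIntegrable 0 ρ
  have := intervalIntegral.integral_eq_sub_of_hasDerivAt h hint
  simp only [p, this]
  simp [Real.exp_zero]

lemma p_strictMono : StrictMonoOn p (Set.Ici (0:ℝ)) := by
  have : StrictMonoOn (fun ρ : ℝ => (ρ - 1) * Real.exp ρ + 1) (Set.Ici (0:ℝ)) := by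
    apply strictMonoOn_of_deriv_pos (convex_Ici 0)
    · exact (((continuous_id.sub continuous_const).mul Real.continuous_exp).add
        continuous_const).continuousOn
    · intro x hx
      rw [interior_Ici] at hx
      have h1 : HasDerivAt (fun ρ : ℝ => (ρ - 1) * Real.exp ρ + 1)
          (1 * Real.exp x + (x - 1) * Real.exp x) x :=
        (((hasDerivAt_id x).sub_const 1).mul (Real.hasDerivAt_exp x)).add_const 1
      have h2 : HasDerivAt (fun ρ : ℝ => (ρ - 1) * Real.exp ρ + 1) (x * Real.exp x) x := by
        convert h1 using 1; ring
      rw [h2.deriv]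
      exact mul_pos hx (Real.exp_pos x)
  intro a ha b hb hab
  rw [p_closed, p_closed]
  exact this ha hb hab

lemma p_lt {a b : ℝ} (ha : 0 ≤ a) (hab : a < b) : p a < p b :=
  p_strictMono ha (le_trans ha hab.le) hab

lemma p_cont : Continuous p := by
  have : p = fun ρ => (ρ - 1) * Real.exp ρ + 1 := funext p_closed
  rw [this]; continuity

/-- Auxiliary function: `G a ρ = sqrt(2(ρ-a)(p ρ - p a)/(ρ+a))`. -/
noncomputable def G (a ρ : ℝ) : ℝ := Real.sqrt (2 * (ρ - a) * (p ρ - p a) / (ρ + a))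

lemma G_nonneg (a ρ : ℝ) : 0 ≤ G a ρ := Real.sqrt_nonneg _

lemma G_inner_nonneg {a ρ : ℝ} (ha : 0 < a) (h : a ≤ ρ) :
    0 ≤ 2 * (ρ - a) * (p ρ - p a) / (ρ + a) := by
  rcases eq_or_lt_of_le h with rfl | h
  · simp
  · have hp := p_lt ha.le h
    apply div_nonneg (by nlinarith) (by linarith)

lemma G_pos {a ρ : ℝ} (ha : 0 < a) (h : a < ρ) : 0 < G a ρ := by
  apply Real.sqrt_pos.2
  have hp := p_lt ha.le h
  apply div_pos (by nlinarith) (by linarith)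

lemma G_strictMono {a x y : ℝ} (ha : 0 < a) (hx : a ≤ x) (hxy : x < y) :
    G a x < G a y := by
  apply Real.sqrt_lt_sqrt (G_inner_nonneg ha hx)
  have hy : a < y := lt_of_le_of_lt hx hxy
  have hpy := p_lt ha.le hy
  have hxa : 0 < x + a := by linarith
  have hya : 0 < y + a := by linarith
  have key : 2 * (x - a) / (x + a) < 2 * (y - a) / (y + a) := by
    rw [div_lt_div_iff₀ hxa hya]; nlinarith
  have h1 : 2 * (x - a) * (p x - p a) / (x + a) = (2 * (x - a) / (x + a)) * (p x - p a) := by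
    ring
  have h2 : 2 * (y - a) * (p y - p a) / (y + a) = (2 * (y - a) / (y + a)) * (p y - p a) := by
    ring
  rw [h1, h2]
  have hA : 0 ≤ 2 * (x - a) / (x + a) := by
    apply div_nonneg _ hxa.le; linarith
  have hpxy : p x ≤ p y := (p_strictMono (Set.mem_Ici.mpr (by linarith)) (Set.mem_Ici.mpr (by linarith)) hxy).le
  calc (2 * (x - a) / (x + a)) * (p x - p a)
      ≤ (2 * (x - a) / (x + a)) * (p y - p a) := by
        apply mul_le_mul_of_nonneg_left _ hA; linarith
    _ < (2 * (y - a) / (y + a)) * (p y - p a) := by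
        apply mul_lt_mul_of_pos_right key; linarith

lemma G_continuousOn {a : ℝ} (ha : 0 < a) : ContinuousOn (G a) (Set.Ici (0:ℝ)) := by
  apply ContinuousOn.sqrt
  apply ContinuousOn.div
  · exact ((continuous_const.mul (continuous_id.sub continuous_const)).mul
      ((p_cont.sub continuous_const))).continuousOn
  · exact (continuous_id.add continuous_const).continuousOn
  · intro x hx
    have : (0:ℝ) ≤ x := hx
    positivity

lemma sqrt_tendsto_atTop : Tendsto Real.sqrt atTop atTop := by
  apply tendsto_atTop_atTop.2
  intro b
  refine ⟨(max b 0) ^ 2, fun x hx => ?_⟩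
  calc b ≤ max b 0 := le_max_left b 0
    _ = Real.sqrt ((max b 0) ^ 2) := (Real.sqrt_sq (le_max_right b 0)).symm
    _ ≤ Real.sqrt x := Real.sqrt_le_sqrt hx

lemma G_tendsto {a : ℝ} (ha : 0 < a) : Tendsto (G a) atTop atTop := by
  have hp : Tendsto p atTop atTop := by
    have : Tendsto (fun ρ : ℝ => (ρ - 1) * Real.exp ρ + 1) atTop atTop := by
      apply Filter.tendsto_atTop_add_const_right
      exact (tendsto_atTop_add_const_right _ (-1) tendsto_id).atTop_mul_atTop₀
        Real.tendsto_exp_atTop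
    have heq : p = fun ρ => (ρ - 1) * Real.exp ρ + 1 := funext p_closed
    rw [heq]; exact this
  have hinner : Tendsto (fun ρ => 2 * (ρ - a) * (p ρ - p a) / (ρ + a)) atTop atTop := by
    apply tendsto_atTop_mono' _ _ (tendsto_atTop_add_const_right _ (-p a) hp)
    filter_upwards [eventually_ge_atTop (3 * a), eventually_ge_atTop a] with ρ h3 hρa
    -- show p ρ + (-p a) ≤ inner
    have hpa : p a ≤ p ρ := by
      rcases eq_or_lt_of_le hρa with rfl | h
      · exact le_refl _
      · exact (p_lt ha.le h).le
    have hden : 0 < ρ + a := by linarith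
    rw [le_div_iff₀ hden]
    nlinarith [mul_nonneg (sub_nonneg.2 hpa) (by linarith : (0:ℝ) ≤ ρ - 3*a)]
  exact sqrt_tendsto_atTop.comp hinner

lemma eq_iff {a ρ e u w : ℝ} (ha : 0 < a) (hρ : a < ρ) (he : 0 < e) (hw : u ≤ w) :
    (u - w) ^ 2 * (ρ + a) / 2 = e * (ρ - a) * (p ρ - p a) ↔
      w - u = Real.sqrt e * G a ρ := by
  have hden : 0 < ρ + a := by linarith
  have hinner := G_inner_nonneg ha hρ.le
  have hsplit : Real.sqrt e * G a ρ =
      Real.sqrt (e * (2 * (ρ - a) * (p ρ - p a) / (ρ + a))) := by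
    rw [Real.sqrt_mul he.le]; rfl
  constructor
  · intro h
    have h2 : (w - u) ^ 2 = e * (2 * (ρ - a) * (p ρ - p a) / (ρ + a)) := by
      field_simp
      linear_combination 2 * h
    rw [hsplit, ← h2, Real.sqrt_sq (by linarith)]
  · intro h
    have h2 : (w - u) ^ 2 = e * (2 * (ρ - a) * (p ρ - p a) / (ρ + a)) := by
      rw [h, hsplit, Real.sq_sqrt (by positivity)]
    field_simp at h2
    linear_combination h2 / 2

theorem stmt0 (ul ur ρl ρr : ℝ) (hu : ur < ul) (hρl : 0 < ρl) (hρr : 0 < ρr) :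
    ∃ η > (0:ℝ), ∀ ε : ℝ, 0 < ε → ε < η →
      ∃! s : ℝ × ℝ,
        (ur < s.1 ∧ s.1 < ul ∧ ρl < s.2 ∧ ρr < s.2) ∧
        (s.1 - ul) ^ 2 * (s.2 + ρl) / 2 = ε * (s.2 - ρl) * (p s.2 - p ρl) ∧
        (s.1 - ur) ^ 2 * (s.2 + ρr) / 2 = ε * (s.2 - ρr) * (p s.2 - p ρr) := by
  set d := ul - ur with hd_def
  have hd : 0 < d := by simp [hd_def]; linarith
  set m := max ρl ρr with hm_def
  have hm : 0 < m := lt_of_lt_of_le hρl (le_max_left _ _)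
  set C := G ρl m + G ρr m with hC_def
  have hC0 : 0 ≤ C := add_nonneg (G_nonneg _ _) (G_nonneg _ _)
  have hC1 : 0 < C + 1 := by linarith
  refine ⟨(d / (C + 1)) ^ 2, by positivity, fun ε hε hεη => ?_⟩
  have hsε : 0 < Real.sqrt ε := Real.sqrt_pos.2 hε
  have hsεlt : Real.sqrt ε < d / (C + 1) := by
    have h := Real.sqrt_lt_sqrt hε.le hεη
    rwa [Real.sqrt_sq (by positivity)] at h
  set Φ : ℝ → ℝ := fun ρ => Real.sqrt ε * (G ρl ρ + G ρr ρ) with hΦ_def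
  have hΦm : Φ m < d := by
    have h1 : Real.sqrt ε * (C + 1) < d := by
      rw [← lt_div_iff₀ hC1]; exact hsεlt
    have h2 : Real.sqrt ε * C ≤ Real.sqrt ε * (C + 1) := by nlinarith [hsε.le]
    simpa [hΦ_def, hC_def] using lt_of_le_of_lt h2 h1
  have hmono : StrictMonoOn Φ (Set.Ici m) := by
    intro x hx y hy hxy
    have hlx : ρl ≤ x := le_trans (le_max_left _ _) hx
    have hrx : ρr ≤ x := le_trans (le_max_right _ _) hx
    exact mul_lt_mul_of_pos_left
      (add_lt_add (G_strictMono hρl hlx hxy) (G_strictMono hρr hrx hxy)) hsε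
  have hcont : ContinuousOn Φ (Set.Ici (0:ℝ)) :=
    continuousOn_const.mul ((G_continuousOn hρl).add (G_continuousOn hρr))
  have htop : Tendsto Φ atTop atTop := by
    apply tendsto_atTop_mono (fun ρ => ?_)
      (Tendsto.const_mul_atTop hsε (G_tendsto hρl))
    have := G_nonneg ρr ρ
    simp only [hΦ_def]
    nlinarith [hsε.le]
  obtain ⟨R, hRd, hRm⟩ := ((htop.eventually_ge_atTop d).and (eventually_ge_atTop m)).exists
  have hsub : Set.Icc m R ⊆ Set.Ici (0:ℝ) := fun x hx => le_trans hm.le hx.1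
  obtain ⟨ρs, hρsmem, hΦρs⟩ := intermediate_value_Icc hRm (hcont.mono hsub) ⟨hΦm.le, hRd⟩
  have hρsm : m < ρs := by
    rcases eq_or_lt_of_le hρsmem.1 with h | h
    · exfalso; rw [← h] at hΦρs; linarith
    · exact h
  have hρsl : ρl < ρs := lt_of_le_of_lt (le_max_left _ _) hρsm
  have hρsr : ρr < ρs := lt_of_le_of_lt (le_max_right _ _) hρsm
  have hGl : 0 < Real.sqrt ε * G ρl ρs := mul_pos hsε (G_pos hρl hρsl)
  have hGr : 0 < Real.sqrt ε * G ρr ρs := mul_pos hsε (G_pos hρr hρsr)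
  have hsum : Real.sqrt ε * G ρl ρs + Real.sqrt ε * G ρr ρs = d := by
    have : Φ ρs = d := hΦρs
    simp only [hΦ_def] at this
    linarith [this, mul_add (Real.sqrt ε) (G ρl ρs) (G ρr ρs)]
  set us := ul - Real.sqrt ε * G ρl ρs with hus_def
  have husl : ul - us = Real.sqrt ε * G ρl ρs := by simp [hus_def]
  have husr : us - ur = Real.sqrt ε * G ρr ρs := by
    simp only [hus_def]; linarith
  refine ⟨(us, ρs), ⟨⟨by linarith, by linarith, hρsl, hρsr⟩, ?_, ?_⟩, ?_⟩
  · exact (eq_iff hρl hρsl hε (by linarith)).mpr husl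
  · have h : (us - ur) ^ 2 = (ur - us) ^ 2 := by ring
    show (us - ur) ^ 2 * (ρs + ρr) / 2 = ε * (ρs - ρr) * (p ρs - p ρr)
    rw [h]
    exact (eq_iff hρr hρsr hε (by linarith)).mpr husr
  · rintro ⟨u, ρ⟩ ⟨⟨h1, h2, h3, h4⟩, he1, he2⟩
    have hul : ul - u = Real.sqrt ε * G ρl ρ := (eq_iff hρl h3 hε h2.le).mp he1
    have hur : u - ur = Real.sqrt ε * G ρr ρ := by
      apply (eq_iff hρr h4 hε h1.le).mp
      have h : (ur - u) ^ 2 = (u - ur) ^ 2 := by ring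
      rw [h]; exact he2
    have hΦρ : Φ ρ = d := by
      simp only [hΦ_def, mul_add]
      linarith
    have hρm : m < ρ := max_lt h3 h4
    have hρeq : ρ = ρs :=
      hmono.injOn (Set.mem_Ici.mpr hρm.le) (Set.mem_Ici.mpr hρsm.le) (hΦρ.trans hΦρs.symm)
    subst hρeq
    have : u = us := by rw [hus_def]; linarith
    simp [this]
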